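/- The function τ(x,y,t) = a₀ + Σⱼ₌₁^g aⱼ exp(uⱼx + vⱼy + wⱼt), with uⱼ = κⱼ - κ₀, vⱼ = κⱼ² - κ₀², wⱼ = κⱼ³ - κ₀³ and arbitrary real coefficients aⱼ, satisfies Hirota's differential equation τ·τ_xxxx - 4τ_xxx·τ_x + 3τ_xx² + 4τ_x·τ_t - 4τ·τ_xt + 3τ·τ_yy - 3τ_y² = 0. -/

import Mathlib

noncomputable def pdx (f : ℝ → ℝ → ℝ → ℝ) : ℝ → ℝ → ℝ → ℝ :=
  fun x y t => deriv (fun s => f s y t) x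

noncomputable def pdy (f : ℝ → ℝ → ℝ → ℝ) : ℝ → ℝ → ℝ → ℝ :=
  fun x y t => deriv (fun s => f x s t) y

noncomputable def pdt (f : ℝ → ℝ → ℝ → ℝ) : ℝ → ℝ → ℝ → ℝ :=
  fun x y t => deriv (fun s => f x y s) t

/-- Hirota's bilinear differential equation for τ(x,y,t). -/
def SatisfiesHirota (τ : ℝ → ℝ → ℝ → ℝ) : Prop :=
  ∀ x y t : ℝ,
    τ x y t * pdx (pdx (pdx (pdx τ))) x y t
      - 4 * pdx (pdx (pdx τ)) x y t * pdx τ x y t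
      + 3 * (pdx (pdx τ) x y t) ^ 2
      + 4 * pdx τ x y t * pdt τ x y t
      - 4 * τ x y t * pdt (pdx τ) x y t
      + 3 * τ x y t * pdy (pdy τ) x y t
      - 3 * (pdy τ x y t) ^ 2 = 0

lemma pdx_const_add (c : ℝ) (f : ℝ → ℝ → ℝ → ℝ) :
    pdx (fun x y t => c + f x y t) = pdx f := by
  funext x y t
  simp only [pdx, deriv_const_add]

lemma pdy_const_add (c : ℝ) (f : ℝ → ℝ → ℝ → ℝ) :
    pdy (fun x y t => c + f x y t) = pdy f := by
  funext x y t
  simp only [pdy, deriv_const_add]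

lemma pdt_const_add (c : ℝ) (f : ℝ → ℝ → ℝ → ℝ) :
    pdt (fun x y t => c + f x y t) = pdt f := by
  funext x y t
  simp only [pdt, deriv_const_add]

lemma pdxS {n : ℕ} (c u v w : Fin n → ℝ) :
    pdx (fun x y t => ∑ j, c j * Real.exp (u j * x + v j * y + w j * t))
    = fun x y t => ∑ j, c j * u j * Real.exp (u j * x + v j * y + w j * t) := by
  funext x y t
  have h : HasDerivAt (fun s => ∑ j : Fin n, c j * Real.exp (u j * s + v j * y + w j * t))
      (∑ j, c j * u j * Real.exp (u j * x + v j * y + w j * t)) x := by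
    apply HasDerivAt.fun_sum
    intro j _
    have h1 : HasDerivAt (fun s => u j * s + v j * y + w j * t) (u j) x := by
      simpa using (((hasDerivAt_id x).const_mul (u j)).add_const (v j * y)).add_const (w j * t)
    have h2 := (h1.exp).const_mul (c j)
    convert h2 using 1
    · rfl
    · ring
  exact h.deriv

lemma pdyS {n : ℕ} (c u v w : Fin n → ℝ) :
    pdy (fun x y t => ∑ j, c j * Real.exp (u j * x + v j * y + w j * t))
    = fun x y t => ∑ j, c j * v j * Real.exp (u j * x + v j * y + w j * t) := by
  funext x y t
  have h : HasDerivAt (fun s => ∑ j : Fin n, c j * Real.exp (u j * x + v j * s + w j * t))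
      (∑ j, c j * v j * Real.exp (u j * x + v j * y + w j * t)) y := by
    apply HasDerivAt.fun_sum
    intro j _
    have h1 : HasDerivAt (fun s => u j * x + v j * s + w j * t) (v j) y := by
      simpa using (((hasDerivAt_id y).const_mul (v j)).const_add (u j * x)).add_const (w j * t)
    have h2 := (h1.exp).const_mul (c j)
    convert h2 using 1
    · rfl
    · ring
  exact h.deriv

lemma pdtS {n : ℕ} (c u v w : Fin n → ℝ) :
    pdt (fun x y t => ∑ j, c j * Real.exp (u j * x + v j * y + w j * t))
    = fun x y t => ∑ j, c j * w j * Real.exp (u j * x + v j * y + w j * t) := by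
  funext x y t
  have h : HasDerivAt (fun s => ∑ j : Fin n, c j * Real.exp (u j * x + v j * y + w j * s))
      (∑ j, c j * w j * Real.exp (u j * x + v j * y + w j * t)) t := by
    apply HasDerivAt.fun_sum
    intro j _
    have h1 : HasDerivAt (fun s => u j * x + v j * y + w j * s) (w j) t := by
      simpa using ((hasDerivAt_id t).const_mul (w j)).const_add (u j * x + v j * y)
    have h2 := (h1.exp).const_mul (c j)
    convert h2 using 1
    · rfl
    · ring
  exact h.deriv

lemma key {n : ℕ} (a₀ : ℝ) (b u v w : Fin n → ℝ)
    (h1 : ∀ j, u j ^ 4 - 4 * u j * w j + 3 * v j ^ 2 = 0)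
    (h2 : ∀ j k, (u j - u k) ^ 4 - 4 * (u j - u k) * (w j - w k) + 3 * (v j - v k) ^ 2 = 0) :
    (a₀ + ∑ j, b j) * (∑ j, b j * u j ^ 4)
      - 4 * (∑ j, b j * u j ^ 3) * (∑ j, b j * u j)
      + 3 * (∑ j, b j * u j ^ 2) ^ 2
      + 4 * (∑ j, b j * u j) * (∑ j, b j * w j)
      - 4 * (a₀ + ∑ j, b j) * (∑ j, b j * (u j * w j))
      + 3 * (a₀ + ∑ j, b j) * (∑ j, b j * v j ^ 2)
      - 3 * (∑ j, b j * v j) ^ 2 = 0 := by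
  have hA : ∑ j, b j * (u j ^ 4 - 4 * u j * w j + 3 * v j ^ 2) = 0 :=
    Finset.sum_eq_zero fun j _ => by rw [h1 j, mul_zero]
  have hA' : (∑ j, b j * u j ^ 4) - 4 * (∑ j, b j * (u j * w j)) + 3 * (∑ j, b j * v j ^ 2) = 0 := by
    refine Eq.trans ?_ hA
    rw [Finset.mul_sum, Finset.mul_sum, ← Finset.sum_sub_distrib, ← Finset.sum_add_distrib]
    exact Finset.sum_congr rfl fun j _ => by ring
  have hanti : ∀ j k : Fin n,
      (b j * b k * (u j ^ 4 - 4 * u k ^ 3 * u j + 3 * u k ^ 2 * u j ^ 2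
        + 4 * u k * w j - 4 * u j * w j + 3 * v j ^ 2 - 3 * v k * v j))
      + (b k * b j * (u k ^ 4 - 4 * u j ^ 3 * u k + 3 * u j ^ 2 * u k ^ 2
        + 4 * u j * w k - 4 * u k * w k + 3 * v k ^ 2 - 3 * v j * v k)) = 0 := by
    intro j k
    linear_combination (b j * b k) * h2 j k
  have hD : (∑ j, ∑ k, b j * b k * (u j ^ 4 - 4 * u k ^ 3 * u j + 3 * u k ^ 2 * u j ^ 2
        + 4 * u k * w j - 4 * u j * w j + 3 * v j ^ 2 - 3 * v k * v j)) = 0 := by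
    have hswap : (∑ j : Fin n, ∑ k : Fin n, b k * b j * (u k ^ 4 - 4 * u j ^ 3 * u k + 3 * u j ^ 2 * u k ^ 2
        + 4 * u j * w k - 4 * u k * w k + 3 * v k ^ 2 - 3 * v j * v k))
        = ∑ j : Fin n, ∑ k : Fin n, b j * b k * (u j ^ 4 - 4 * u k ^ 3 * u j + 3 * u k ^ 2 * u j ^ 2
        + 4 * u k * w j - 4 * u j * w j + 3 * v j ^ 2 - 3 * v k * v j) := Finset.sum_comm
    have hzero : (∑ j : Fin n, ∑ k : Fin n,
        ((b j * b k * (u j ^ 4 - 4 * u k ^ 3 * u j + 3 * u k ^ 2 * u j ^ 2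
        + 4 * u k * w j - 4 * u j * w j + 3 * v j ^ 2 - 3 * v k * v j))
        + (b k * b j * (u k ^ 4 - 4 * u j ^ 3 * u k + 3 * u j ^ 2 * u k ^ 2
        + 4 * u j * w k - 4 * u k * w k + 3 * v k ^ 2 - 3 * v j * v k)))) = 0 :=
      Finset.sum_eq_zero fun j _ => Finset.sum_eq_zero fun k _ => hanti j k
    simp only [Finset.sum_add_distrib] at hzero
    linarith [hzero, hswap]
  have hB : (∑ j, b j) * (∑ j, b j * u j ^ 4) - 4 * (∑ j, b j * u j ^ 3) * (∑ j, b j * u j)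
      + 3 * (∑ j, b j * u j ^ 2) ^ 2 + 4 * (∑ j, b j * u j) * (∑ j, b j * w j)
      - 4 * (∑ j, b j) * (∑ j, b j * (u j * w j)) + 3 * (∑ j, b j) * (∑ j, b j * v j ^ 2)
      - 3 * (∑ j, b j * v j) ^ 2
      = ∑ j, ∑ k, b j * b k * (u j ^ 4 - 4 * u k ^ 3 * u j + 3 * u k ^ 2 * u j ^ 2
        + 4 * u k * w j - 4 * u j * w j + 3 * v j ^ 2 - 3 * v k * v j) := by
    rw [pow_two (∑ j, b j * u j ^ 2), pow_two (∑ j, b j * v j)]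
    simp only [Finset.sum_mul, Finset.mul_sum]
    simp only [← Finset.sum_sub_distrib, ← Finset.sum_add_distrib]
    exact Finset.sum_congr rfl fun j _ => Finset.sum_congr rfl fun k _ => by ring
  linear_combination a₀ * hA' + hB + hD

/-- The simplex tau function τ = a₀ + Σⱼ aⱼ exp(uⱼx + vⱼy + wⱼt), with
uⱼ = κⱼ - κ₀, vⱼ = κⱼ² - κ₀², wⱼ = κⱼ³ - κ₀³, satisfies Hirota's equation. -/
theorem simplex_tau_satisfies_hirota {g : ℕ} (κ₀ a₀ : ℝ) (κ a : Fin g → ℝ) :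
    SatisfiesHirota (fun x y t =>
      a₀ + ∑ j, a j * Real.exp ((κ j - κ₀) * x + (κ j ^ 2 - κ₀ ^ 2) * y
        + (κ j ^ 3 - κ₀ ^ 3) * t)) := by
  intro x y t
  simp only [pdx_const_add, pdy_const_add, pdt_const_add, pdxS, pdyS, pdtS]
  have hkey := key a₀
    (fun j => a j * Real.exp ((κ j - κ₀) * x + (κ j ^ 2 - κ₀ ^ 2) * y + (κ j ^ 3 - κ₀ ^ 3) * t))
    (fun j => κ j - κ₀) (fun j => κ j ^ 2 - κ₀ ^ 2) (fun j => κ j ^ 3 - κ₀ ^ 3)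
    (fun j => by ring) (fun j k => by ring)
  rw [show (∑ j, a j * (κ j - κ₀) * (κ j - κ₀) * (κ j - κ₀) * (κ j - κ₀) * Real.exp ((κ j - κ₀) * x + (κ j ^ 2 - κ₀ ^ 2) * y + (κ j ^ 3 - κ₀ ^ 3) * t)) = ∑ j, a j * Real.exp ((κ j - κ₀) * x + (κ j ^ 2 - κ₀ ^ 2) * y + (κ j ^ 3 - κ₀ ^ 3) * t) * (κ j - κ₀) ^ 4 from Finset.sum_congr rfl fun j _ => by ring]
  rw [show (∑ j, a j * (κ j - κ₀) * (κ j - κ₀) * (κ j - κ₀) * Real.exp ((κ j - κ₀) * x + (κ j ^ 2 - κ₀ ^ 2) * y + (κ j ^ 3 - κ₀ ^ 3) * t)) = ∑ j, a j * Real.exp ((κ j - κ₀) * x + (κ j ^ 2 - κ₀ ^ 2) * y + (κ j ^ 3 - κ₀ ^ 3) * t) * (κ j - κ₀) ^ 3 from Finset.sum_congr rfl fun j _ => by ring]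
  rw [show (∑ j, a j * (κ j - κ₀) * (κ j - κ₀) * Real.exp ((κ j - κ₀) * x + (κ j ^ 2 - κ₀ ^ 2) * y + (κ j ^ 3 - κ₀ ^ 3) * t)) = ∑ j, a j * Real.exp ((κ j - κ₀) * x + (κ j ^ 2 - κ₀ ^ 2) * y + (κ j ^ 3 - κ₀ ^ 3) * t) * (κ j - κ₀) ^ 2 from Finset.sum_congr rfl fun j _ => by ring]
  rw [show (∑ j, a j * (κ j - κ₀) * (κ j ^ 3 - κ₀ ^ 3) * Real.exp ((κ j - κ₀) * x + (κ j ^ 2 - κ₀ ^ 2) * y + (κ j ^ 3 - κ₀ ^ 3) * t)) = ∑ j, a j * Real.exp ((κ j - κ₀) * x + (κ j ^ 2 - κ₀ ^ 2) * y + (κ j ^ 3 - κ₀ ^ 3) * t) * ((κ j - κ₀) * (κ j ^ 3 - κ₀ ^ 3)) from Finset.sum_congr rfl fun j _ => by ring]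
  rw [show (∑ j, a j * (κ j ^ 2 - κ₀ ^ 2) * (κ j ^ 2 - κ₀ ^ 2) * Real.exp ((κ j - κ₀) * x + (κ j ^ 2 - κ₀ ^ 2) * y + (κ j ^ 3 - κ₀ ^ 3) * t)) = ∑ j, a j * Real.exp ((κ j - κ₀) * x + (κ j ^ 2 - κ₀ ^ 2) * y + (κ j ^ 3 - κ₀ ^ 3) * t) * (κ j ^ 2 - κ₀ ^ 2) ^ 2 from Finset.sum_congr rfl fun j _ => by ring]
  rw [show (∑ j, a j * (κ j - κ₀) * Real.exp ((κ j - κ₀) * x + (κ j ^ 2 - κ₀ ^ 2) * y + (κ j ^ 3 - κ₀ ^ 3) * t)) = ∑ j, a j * Real.exp ((κ j - κ₀) * x + (κ j ^ 2 - κ₀ ^ 2) * y + (κ j ^ 3 - κ₀ ^ 3) * t) * (κ j - κ₀) from Finset.sum_congr rfl fun j _ => by ring]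
  rw [show (∑ j, a j * (κ j ^ 3 - κ₀ ^ 3) * Real.exp ((κ j - κ₀) * x + (κ j ^ 2 - κ₀ ^ 2) * y + (κ j ^ 3 - κ₀ ^ 3) * t)) = ∑ j, a j * Real.exp ((κ j - κ₀) * x + (κ j ^ 2 - κ₀ ^ 2) * y + (κ j ^ 3 - κ₀ ^ 3) * t) * (κ j ^ 3 - κ₀ ^ 3) from Finset.sum_congr rfl fun j _ => by ring]
  rw [show (∑ j, a j * (κ j ^ 2 - κ₀ ^ 2) * Real.exp ((κ j - κ₀) * x + (κ j ^ 2 - κ₀ ^ 2) * y + (κ j ^ 3 - κ₀ ^ 3) * t)) = ∑ j, a j * Real.exp ((κ j - κ₀) * x + (κ j ^ 2 - κ₀ ^ 2) * y + (κ j ^ 3 - κ₀ ^ 3) * t) * (κ j ^ 2 - κ₀ ^ 2) from Finset.sum_congr rfl fun j _ => by ring]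
  exact hkey
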